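/- The characteristic polynomial of the (n+1)×(n+1) Kac matrix S_n equals Π_{d=0}^{n} (x − (n − 2d)). -/
import Mathlib


open Polynomial

/-- The `(n+1) × (n+1)` Kac matrix: subdiagonal entries `1, 2, ..., n`,
superdiagonal entries `n, n-1, ..., 1`, and zeros elsewhere. -/
def kacMatrix (n : ℕ) : Matrix (Fin (n + 1)) (Fin (n + 1)) ℝ :=
  Matrix.of fun i j =>
    if (i : ℕ) = (j : ℕ) + 1 then (i : ℝ)
    else if (j : ℕ) = (i : ℕ) + 1 then (n : ℝ) + 1 - (j : ℝ)
    else 0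

/-- Upper bidiagonal matrix similar to the Kac matrix. -/
def kacU (n : ℕ) : Matrix (Fin (n + 1)) (Fin (n + 1)) ℝ :=
  Matrix.of fun i j =>
    if (i : ℕ) = (j : ℕ) then (n : ℝ) - 2 * (i : ℕ)
    else if (j : ℕ) = (i : ℕ) + 1 then (n : ℝ) - (i : ℕ)
    else 0

/-- The Pascal matrix. -/
def kacP (n : ℕ) : Matrix (Fin (n + 1)) (Fin (n + 1)) ℝ :=
  Matrix.of fun i j => ((i : ℕ).choose (j : ℕ) : ℝ)

lemma binomB (i m : ℕ) :
    ((m : ℝ) + 1) * (i.choose (m + 1)) = ((i : ℝ) - m) * i.choose m := by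
  rcases le_or_gt m i with h | h
  · have h1 := Nat.choose_succ_right_eq i m
    have h2 := congrArg (Nat.cast (R := ℝ)) h1
    push_cast [Nat.cast_sub h] at h2
    linarith
  · rw [Nat.choose_eq_zero_of_lt h, Nat.choose_eq_zero_of_lt (by omega)]
    simp

lemma binomA (i m : ℕ) :
    (i : ℝ) * ((i - 1).choose (m + 1)) = ((i : ℝ) - (m + 1)) * i.choose (m + 1) := by
  rcases i with _ | t
  · simp
  · simp only [Nat.add_sub_cancel]
    rcases le_or_gt (m + 1) (t + 1) with h | h
    · have h1 : (t + 1) * (t.choose (m + 1)) = (t + 1).choose (m + 1) * ((t + 1) - (m + 1)) := by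
        rw [Nat.add_one_mul_choose_eq, Nat.choose_succ_right_eq]
      have h2 := congrArg (Nat.cast (R := ℝ)) h1
      push_cast [Nat.cast_sub (show m ≤ t by omega)] at h2
      push_cast
      linear_combination h2
    · rw [Nat.choose_eq_zero_of_lt (by omega), Nat.choose_eq_zero_of_lt h]
      push_cast
      ring

lemma key0 (n i : ℕ) :
    (i : ℝ) * ((i - 1).choose 0) + ((n : ℝ) - i) * ((i + 1).choose 0)
      = (i.choose 0) * (n : ℝ) := by
  simp only [Nat.choose_zero_right, Nat.cast_one]
  ring

lemma keyS (n i m : ℕ) :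
    (i : ℝ) * ((i - 1).choose (m + 1)) + ((n : ℝ) - i) * ((i + 1).choose (m + 1))
      = (i.choose (m + 1)) * ((n : ℝ) - 2 * (m + 1)) + (i.choose m) * ((n : ℝ) - m) := by
  have hA := binomA i m
  have hB := binomB i m
  have hP : (((i + 1).choose (m + 1)) : ℝ) = i.choose m + i.choose (m + 1) := by
    exact_mod_cast congrArg (Nat.cast (R := ℝ)) (Nat.choose_succ_succ i m)
  rw [hP]
  linear_combination hA + hB

lemma kac_conj (n : ℕ) : kacMatrix n * kacP n = kacP n * kacU n := by
  ext i j
  rw [Matrix.mul_apply, Matrix.mul_apply]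
  simp only [kacMatrix, kacP, kacU, Matrix.of_apply]
  rw [Fin.sum_univ_eq_sum_range
      (fun k => (if (i : ℕ) = k + 1 then ((i : ℕ) : ℝ)
        else if k = (i : ℕ) + 1 then (n : ℝ) + 1 - (k : ℝ) else 0) * ((k).choose (j : ℕ) : ℝ)),
    Fin.sum_univ_eq_sum_range
      (fun k => ((i : ℕ).choose k : ℝ) *
        (if k = (j : ℕ) then (n : ℝ) - 2 * (k : ℕ)
         else if (j : ℕ) = k + 1 then (n : ℝ) - (k : ℕ) else 0))]
  have hi : (i : ℕ) ≤ n := Fin.is_le i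
  have hj : (j : ℕ) ≤ n := Fin.is_le j
  -- split and evaluate LHS
  have hLsplit : ∀ k, (if (i : ℕ) = k + 1 then ((i : ℕ) : ℝ)
        else if k = (i : ℕ) + 1 then (n : ℝ) + 1 - (k : ℝ) else 0) * ((k).choose (j : ℕ) : ℝ)
      = (if k = (i : ℕ) - 1 ∧ 1 ≤ (i : ℕ) then ((i : ℕ) : ℝ) * ((k).choose (j : ℕ) : ℝ) else 0)
        + (if k = (i : ℕ) + 1 then ((n : ℝ) + 1 - (k : ℝ)) * ((k).choose (j : ℕ) : ℝ) else 0) := by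
    intro k
    split_ifs <;> (first | ring1 | (exfalso; omega))
  have hRsplit : ∀ k, ((i : ℕ).choose k : ℝ) *
        (if k = (j : ℕ) then (n : ℝ) - 2 * (k : ℕ)
         else if (j : ℕ) = k + 1 then (n : ℝ) - (k : ℕ) else 0)
      = (if k = (j : ℕ) then ((i : ℕ).choose k : ℝ) * ((n : ℝ) - 2 * (k : ℕ)) else 0)
        + (if k = (j : ℕ) - 1 ∧ 1 ≤ (j : ℕ) then ((i : ℕ).choose k : ℝ) * ((n : ℝ) - (k : ℕ)) else 0) := by
    intro k
    split_ifs <;> (first | ring1 | (exfalso; omega))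
  simp only [hLsplit, hRsplit, Finset.sum_add_distrib]
  rw [Finset.sum_ite_eq', Finset.sum_ite_eq']
  have e1 : ∑ k ∈ Finset.range (n + 1),
      (if k = (i : ℕ) - 1 ∧ 1 ≤ (i : ℕ) then ((i : ℕ) : ℝ) * ((k).choose (j : ℕ) : ℝ) else 0)
      = ((i : ℕ) : ℝ) * (((i : ℕ) - 1).choose (j : ℕ) : ℝ) := by
    rcases Nat.eq_zero_or_pos (i : ℕ) with h0 | h0
    · rw [h0]
      simp
    · rw [Finset.sum_eq_single ((i : ℕ) - 1)]
      · exact if_pos ⟨rfl, h0⟩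
      · intro b _ hb
        simp only [ite_eq_right_iff]
        intro hc
        exact absurd hc.1 hb
      · intro hmem
        exact absurd (Finset.mem_range.mpr (by omega)) hmem
  have e2 : ∑ k ∈ Finset.range (n + 1),
      (if k = (j : ℕ) - 1 ∧ 1 ≤ (j : ℕ) then ((i : ℕ).choose k : ℝ) * ((n : ℝ) - (k : ℕ)) else 0)
      = if 1 ≤ (j : ℕ) then ((i : ℕ).choose ((j : ℕ) - 1) : ℝ) * ((n : ℝ) - ((j : ℕ) - 1 : ℕ)) else 0 := by
    rcases Nat.eq_zero_or_pos (j : ℕ) with h0 | h0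
    · rw [h0]
      simp
    · rw [Finset.sum_eq_single ((j : ℕ) - 1)]
      · rw [if_pos (show (j : ℕ) - 1 = (j : ℕ) - 1 ∧ 1 ≤ (j : ℕ) from ⟨rfl, h0⟩), if_pos (show 1 ≤ (j : ℕ) from h0)]
      · intro b _ hb
        simp only [ite_eq_right_iff]
        intro hc
        exact absurd hc.1 hb
      · intro hmem
        exact absurd (Finset.mem_range.mpr (by omega)) hmem
  rw [e1, e2]
  have hb : (if (i : ℕ) + 1 ∈ Finset.range (n + 1)
      then ((n : ℝ) + 1 - (((i : ℕ) + 1 : ℕ) : ℝ)) * ((((i : ℕ) + 1)).choose (j : ℕ) : ℝ) else 0)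
      = ((n : ℝ) - ((i : ℕ) : ℝ)) * ((((i : ℕ) + 1)).choose (j : ℕ) : ℝ) := by
    split_ifs with h
    · push_cast
      ring
    · have hin : (i : ℕ) = n := by
        simp only [Finset.mem_range] at h
        omega
      rw [hin]
      simp
  have hj0 : (if ((j : ℕ)) ∈ Finset.range (n + 1)
      then ((i : ℕ).choose (j : ℕ) : ℝ) * ((n : ℝ) - 2 * ((j : ℕ) : ℕ)) else 0)
      = ((i : ℕ).choose (j : ℕ) : ℝ) * ((n : ℝ) - 2 * ((j : ℕ) : ℝ)) := by
    rw [if_pos (Finset.mem_range.mpr (by omega))]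
  rw [hb, hj0]
  obtain ⟨m, hm⟩ | h0 : (∃ m, (j : ℕ) = m + 1) ∨ (j : ℕ) = 0 := by
    cases h : (j : ℕ) with
    | zero => exact Or.inr rfl
    | succ m => exact Or.inl ⟨m, rfl⟩
  · rw [hm]
    rw [if_pos (by omega)]
    have hk := keyS n (i : ℕ) m
    simp only [Nat.add_sub_cancel]
    push_cast at hk ⊢
    linear_combination hk
  · rw [h0]
    rw [if_neg (by omega)]
    have hk := key0 n (i : ℕ)
    push_cast at hk ⊢
    linear_combination hk

lemma kacU_charpoly (n : ℕ) :
    (kacU n).charpoly = ∏ d ∈ Finset.range (n + 1), (X - C ((n : ℝ) - 2 * d)) := by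
  rw [Matrix.charpoly_of_upperTriangular]
  · rw [← Fin.prod_univ_eq_prod_range (fun d => (X - C ((n : ℝ) - 2 * d)))]
    apply Finset.prod_congr rfl
    intro i _
    simp [kacU]
  · intro i j hij
    have : (j : ℕ) < (i : ℕ) := hij
    simp only [kacU, Matrix.of_apply]
    rw [if_neg (by omega), if_neg (by omega)]

lemma kacP_det (n : ℕ) : (kacP n).det = 1 := by
  rw [Matrix.det_of_lowerTriangular _ ?h]
  · apply Finset.prod_eq_one
    intro i _
    simp [kacP]
  case h =>
    intro i j hij
    have : (i : ℕ) < (j : ℕ) := hij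
    simp only [kacP, Matrix.of_apply]
    rw [Nat.choose_eq_zero_of_lt this]
    simp

lemma charpoly_conj_aux {m : Type*} [Fintype m] [DecidableEq m]
    (M N P : Matrix m m ℝ) (hP : P.det ≠ 0) (h : M * P = P * N) :
    M.charpoly = N.charpoly := by
  have key : Matrix.charmatrix M * P.map C = P.map C * Matrix.charmatrix N := by
    rw [Matrix.charmatrix, Matrix.charmatrix, sub_mul, mul_sub]
    congr 1
    · exact (Matrix.scalar_commute X (fun r => Commute.all X r) (P.map C)).eq
    · simp only [RingHom.mapMatrix_apply]
      rw [← Matrix.map_mul, ← Matrix.map_mul, h]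
  have hdet := congrArg Matrix.det key
  rw [Matrix.det_mul, Matrix.det_mul, ← RingHom.mapMatrix_apply, ← RingHom.map_det, mul_comm] at hdet
  have hC : (C P.det : ℝ[X]) ≠ 0 := by
    simpa using hP
  unfold Matrix.charpoly
  exact mul_left_cancel₀ hC hdet

theorem kac_charpoly (n : ℕ) :
    (kacMatrix n).charpoly =
      ∏ d ∈ Finset.range (n + 1), (X - C ((n : ℝ) - 2 * d)) := by
  rw [charpoly_conj_aux (kacMatrix n) (kacU n) (kacP n)
      (by rw [kacP_det]; norm_num) (kac_conj n)]
  exact kacU_charpoly n
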